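/- Let (𝓐, 𝓑) be a k-uniform recovering pair over a finite set X with 𝓐 and 𝓑 nonempty, let θ > 0, and for i ∈ X let a_i = |{A ∈ 𝓐 : i ∈ A}| / |𝓐| and b_i = |{B ∈ 𝓑 : i ∈ B}| / |𝓑|. Suppose that for every A ∈ 𝓐, B ∈ 𝓑 and P ⊆ A \ B, the filtered pair satisfies |𝓐_{A, A\B, P}| · |𝓑_{A, A\B}| / (|𝓐| · |𝓑|) ≤ θ^(−k). Then log₂ |𝓐| ≤ ∑_{i ∈ X} f(a_i, b_i, θ), where f(x, y, t) = x(1−y)h(x) + h(x(1−y)) − x log₂ t. -/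

import Mathlib

/-- `(𝓐, 𝓑)` is a recovering pair over the ground set `X`. -/
def IsRecoveringPair (X : Finset ℕ) (𝓐 𝓑 : Finset (Finset ℕ)) : Prop :=
  (∀ A ∈ 𝓐, A ⊆ X) ∧ (∀ B ∈ 𝓑, B ⊆ X) ∧
  (∀ A ∈ 𝓐, ∀ A' ∈ 𝓐, ∀ B ∈ 𝓑, ∀ B' ∈ 𝓑, A \ B = A' \ B' → A = A') ∧
  (∀ A ∈ 𝓐, ∀ A' ∈ 𝓐, ∀ B ∈ 𝓑, ∀ B' ∈ 𝓑, B \ A = B' \ A' → B = B')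

/-- `(𝓐, 𝓑)` is a `k`-uniform pair. -/
def IsUniformPair (k : ℕ) (𝓐 𝓑 : Finset (Finset ℕ)) : Prop :=
  (∀ A ∈ 𝓐, A.card = k) ∧ (∀ B ∈ 𝓑, B.card = k)

/-- The first family of the filtered pair: `{A \ C : A ∈ 𝓐, A ∩ S = P}`. -/
def filteredA (𝓐 : Finset (Finset ℕ)) (C S P : Finset ℕ) : Finset (Finset ℕ) :=
  (𝓐.filter fun A => A ∩ S = P).image fun A => A \ C

/-- The second family of the filtered pair: `{B \ C : B ∈ 𝓑, C \ B = S}`. -/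
def filteredB (𝓑 : Finset (Finset ℕ)) (C S : Finset ℕ) : Finset (Finset ℕ) :=
  (𝓑.filter fun B => C \ B = S).image fun B => B \ C

/-- The binary entropy function `h(p) = -p log₂ p - (1-p) log₂ (1-p)`
(with the conventions `h(0) = h(1) = 0`, automatic since `logb 2 0 = 0`). -/
noncomputable def binEnt (p : ℝ) : ℝ :=
  -(p * Real.logb 2 p) - (1 - p) * Real.logb 2 (1 - p)

/-- The function `f(x, y, t) = x(1-y)h(x) + h(x(1-y)) - x log₂ t`. -/
noncomputable def fFun (x y t : ℝ) : ℝ :=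
  x * (1 - y) * binEnt x + binEnt (x * (1 - y)) - x * Real.logb 2 t



open Finset in
private lemma gibbs_aux {ι V : Type*} [DecidableEq V] (s : Finset ι) (v : ι → V) (q : V → ℝ)
    (hq0 : ∀ x ∈ s, 0 < q (v x))
    (hq1 : ∑ y ∈ s.image v, q y ≤ 1) :
    ∑ x ∈ s, Real.logb 2 ((s.card : ℝ) / ((s.filter fun z => v z = v x).card : ℝ)) ≤
      ∑ x ∈ s, Real.logb 2 (1 / q (v x)) := by
  rcases s.eq_empty_or_nonempty with rfl | hne
  · simp
  have hn : (0:ℝ) < s.card := by exact_mod_cast card_pos.mpr hne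
  have hN : ∀ x ∈ s, (0:ℝ) < ((s.filter fun z => v z = v x).card : ℝ) := by
    intro x hx
    have : x ∈ s.filter fun z => v z = v x := mem_filter.mpr ⟨hx, rfl⟩
    exact_mod_cast card_pos.mpr ⟨x, this⟩
  -- fiber sum identity
  have hfib : ∑ x ∈ s, q (v x) / ((s.filter fun z => v z = v x).card : ℝ)
      = ∑ y ∈ s.image v, q y := by
    have := Finset.sum_comp (s := s) (g := v)
      (f := fun y => q y / ((s.filter fun z => v z = y).card : ℝ))
    rw [this]
    apply Finset.sum_congr rfl
    intro y hy
    obtain ⟨x, hx, rfl⟩ := mem_image.mp hy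
    have hpos := hN x hx
    rw [nsmul_eq_mul]
    field_simp
  have key : ∑ x ∈ s, Real.log (q (v x) * s.card / ((s.filter fun z => v z = v x).card : ℝ)) ≤ 0 := by
    have h1 : ∀ x ∈ s, Real.log (q (v x) * s.card / ((s.filter fun z => v z = v x).card : ℝ))
        ≤ q (v x) * s.card / ((s.filter fun z => v z = v x).card : ℝ) - 1 := by
      intro x hx
      have hx0 := hq0 x hx
      have hx1 := hN x hx
      exact Real.log_le_sub_one_of_pos (by positivity)
    calc ∑ x ∈ s, Real.log (q (v x) * ↑s.card / ((s.filter fun z => v z = v x).card : ℝ))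
        ≤ ∑ x ∈ s, (q (v x) * ↑s.card / ((s.filter fun z => v z = v x).card : ℝ) - 1) :=
          Finset.sum_le_sum h1
      _ = (s.card : ℝ) * (∑ x ∈ s, q (v x) / ((s.filter fun z => v z = v x).card : ℝ)) - s.card := by
          rw [Finset.sum_sub_distrib, Finset.mul_sum, sum_const, nsmul_eq_mul, mul_one]
          congr 1
          apply Finset.sum_congr rfl
          intro x hx; ring
      _ ≤ (s.card : ℝ) * 1 - s.card := by
          rw [hfib]
          have := mul_le_mul_of_nonneg_left hq1 hn.le
          linarith
      _ = 0 := by ring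
  have hsplit : ∀ x ∈ s, Real.logb 2 ((s.card : ℝ) / ((s.filter fun z => v z = v x).card : ℝ))
      - Real.logb 2 (1 / q (v x))
      = Real.logb 2 (q (v x) * s.card / ((s.filter fun z => v z = v x).card : ℝ)) := by
    intro x hx
    have h0 := hq0 x hx
    have h1 := hN x hx
    rw [← Real.logb_div (by positivity) (by positivity)]
    congr 1
    rw [div_div_eq_mul_div, div_mul_eq_mul_div, div_div]
    rw [mul_one]
    ring
  have : ∑ x ∈ s, (Real.logb 2 ((s.card : ℝ) / ((s.filter fun z => v z = v x).card : ℝ))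
      - Real.logb 2 (1 / q (v x))) ≤ 0 := by
    rw [Finset.sum_congr rfl hsplit]
    have hlog2 : (0:ℝ) < Real.log 2 := Real.log_pos one_lt_two
    have : ∑ x ∈ s, Real.logb 2 (q (v x) * ↑s.card / ((s.filter fun z => v z = v x).card : ℝ))
        = (∑ x ∈ s, Real.log (q (v x) * ↑s.card / ((s.filter fun z => v z = v x).card : ℝ))) / Real.log 2 := by
      rw [Finset.sum_div]; rfl
    rw [this]
    exact div_nonpos_of_nonpos_of_nonneg key hlog2.le
  rw [Finset.sum_sub_distrib] at this
  linarith

open Finset in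
private lemma gibbs_product {ι : Type*} (s : Finset ι) (v : ι → Finset ℕ) (U : Finset ℕ) (p : ℕ → ℝ)
    (hsub : ∀ x ∈ s, v x ⊆ U)
    (hp01 : ∀ i ∈ U, 0 ≤ p i ∧ p i ≤ 1)
    (hpos1 : ∀ x ∈ s, ∀ i ∈ U, i ∈ v x → 0 < p i)
    (hpos2 : ∀ x ∈ s, ∀ i ∈ U, i ∉ v x → p i < 1) :
    ∑ x ∈ s, Real.logb 2 ((s.card : ℝ) / ((s.filter fun z => v z = v x).card : ℝ)) ≤
      ∑ i ∈ U, (((s.filter fun x => i ∈ v x).card : ℝ) * (-(Real.logb 2 (p i))) +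
        ((s.filter fun x => i ∉ v x).card : ℝ) * (-(Real.logb 2 (1 - p i)))) := by
  classical
  set q : Finset ℕ → ℝ := fun y => ∏ i ∈ U, (if i ∈ y then p i else 1 - p i) with hq
  have hfac : ∀ x ∈ s, ∀ i ∈ U, 0 < (if i ∈ v x then p i else 1 - p i) := by
    intro x hx i hi
    by_cases h : i ∈ v x
    · simpa [h] using hpos1 x hx i hi h
    · simp only [h, if_false]
      have := hpos2 x hx i hi h
      linarith
  have hq0 : ∀ x ∈ s, 0 < q (v x) := by
    intro x hx
    exact Finset.prod_pos (hfac x hx)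
  have hq1 : ∑ y ∈ s.image v, q y ≤ 1 := by
    have hpow : ∑ t ∈ U.powerset, q t = 1 := by
      have h1 : ∀ t ∈ U.powerset, q t = (∏ i ∈ t, p i) * ∏ i ∈ U \ t, (1 - p i) := by
        intro t ht
        rw [Finset.mem_powerset] at ht
        show (∏ i ∈ U, if i ∈ t then p i else 1 - p i) = _
        rw [Finset.prod_ite (fun i => p i) (fun i => 1 - p i)]
        congr 1
        · rw [Finset.filter_mem_eq_inter, Finset.inter_eq_right.mpr ht]
        · rw [Finset.sdiff_eq_filter]
      rw [Finset.sum_congr rfl h1, ← Finset.prod_add]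
      simp
    calc ∑ y ∈ s.image v, q y ≤ ∑ t ∈ U.powerset, q t := by
          apply Finset.sum_le_sum_of_subset_of_nonneg
          · intro y hy
            obtain ⟨x, hx, rfl⟩ := Finset.mem_image.mp hy
            exact Finset.mem_powerset.mpr (hsub x hx)
          · intro t _ _
            apply Finset.prod_nonneg
            intro i hi
            by_cases h : i ∈ t <;> simp [h] <;> linarith [(hp01 i hi).1, (hp01 i hi).2]
      _ = 1 := hpow
  refine le_trans (gibbs_aux s v q hq0 hq1) ?_
  have hce : ∀ x ∈ s, Real.logb 2 (1 / q (v x)) =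
      ∑ i ∈ U, (if i ∈ v x then -(Real.logb 2 (p i)) else -(Real.logb 2 (1 - p i))) := by
    intro x hx
    rw [one_div, Real.logb_inv]
    show -Real.logb 2 (∏ i ∈ U, if i ∈ v x then p i else 1 - p i) = _
    rw [Real.logb_prod _ _ (fun i hi => ne_of_gt (hfac x hx i hi)), ← Finset.sum_neg_distrib]
    apply Finset.sum_congr rfl
    intro i hi
    by_cases h : i ∈ v x <;> simp [h]
  rw [Finset.sum_congr rfl hce, Finset.sum_comm]
  apply le_of_eq
  apply Finset.sum_congr rfl
  intro i _
  rw [Finset.sum_ite, Finset.sum_const, Finset.sum_const, nsmul_eq_mul, nsmul_eq_mul]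


open Finset in
private lemma binEnt_term (n c x : ℝ) (hc : c = n * x) :
    c * (-(Real.logb 2 x)) + (n - c) * (-(Real.logb 2 (1 - x))) = n * binEnt x := by
  subst hc; unfold binEnt; ring

set_option maxHeartbeats 2000000 in
theorem stmt_16 (X : Finset ℕ) (𝓐 𝓑 : Finset (Finset ℕ)) (k : ℕ)
    (hrec : IsRecoveringPair X 𝓐 𝓑) (huni : IsUniformPair k 𝓐 𝓑)
    (hA : 𝓐.Nonempty) (hB : 𝓑.Nonempty) (θ : ℝ) (hθ : 0 < θ)
    (a b : ℕ → ℝ)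
    (ha : ∀ i, a i = ((𝓐.filter fun A => i ∈ A).card : ℝ) / 𝓐.card)
    (hb : ∀ i, b i = ((𝓑.filter fun B => i ∈ B).card : ℝ) / 𝓑.card)
    (hfil : ∀ A ∈ 𝓐, ∀ B ∈ 𝓑, ∀ P ⊆ A \ B,
      ((filteredA 𝓐 A (A \ B) P).card * (filteredB 𝓑 A (A \ B)).card : ℝ) /
        (𝓐.card * 𝓑.card) ≤ θ ^ (-(k : ℤ))) :
    Real.logb 2 𝓐.card ≤ ∑ i ∈ X, fFun (a i) (b i) θ := by
  classical
  obtain ⟨hAX, hBX, hrec3, hrec4⟩ := hrec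
  obtain ⟨hkA, hkB⟩ := huni
  have hα : (0:ℝ) < 𝓐.card := by exact_mod_cast Finset.card_pos.mpr hA
  have hβ : (0:ℝ) < 𝓑.card := by exact_mod_cast Finset.card_pos.mpr hB
  -- basic facts about a, b
  have ha01 : ∀ i, 0 ≤ a i ∧ a i ≤ 1 := by
    intro i
    rw [ha i]
    constructor
    · positivity
    · rw [div_le_one hα]
      exact_mod_cast Finset.card_le_card (Finset.filter_subset _ _)
  have hb01 : ∀ i, 0 ≤ b i ∧ b i ≤ 1 := by
    intro i
    rw [hb i]
    constructor
    · positivity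
    · rw [div_le_one hβ]
      exact_mod_cast Finset.card_le_card (Finset.filter_subset _ _)
  have haPos : ∀ i, ∀ A' ∈ 𝓐, i ∈ A' → 0 < a i := by
    intro i A' hA' hi
    rw [ha i]
    have : 0 < (𝓐.filter fun A => i ∈ A).card := Finset.card_pos.mpr ⟨A', Finset.mem_filter.mpr ⟨hA', hi⟩⟩
    positivity
  have haLT : ∀ i, ∀ A' ∈ 𝓐, i ∉ A' → a i < 1 := by
    intro i A' hA' hi
    rw [ha i, div_lt_one hα]
    have : (𝓐.filter fun A => i ∈ A) ⊂ 𝓐 := by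
      refine ⟨Finset.filter_subset _ _, fun hsub => hi ?_⟩
      exact (Finset.mem_filter.mp (hsub hA')).2
    exact_mod_cast Finset.card_lt_card this
  have hbPos : ∀ i, ∀ B' ∈ 𝓑, i ∈ B' → 0 < b i := by
    intro i B' hB' hi
    rw [hb i]
    have : 0 < (𝓑.filter fun B => i ∈ B).card := Finset.card_pos.mpr ⟨B', Finset.mem_filter.mpr ⟨hB', hi⟩⟩
    positivity
  have hbLT : ∀ i, ∀ B' ∈ 𝓑, i ∉ B' → b i < 1 := by
    intro i B' hB' hi
    rw [hb i, div_lt_one hβ]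
    have : (𝓑.filter fun B => i ∈ B) ⊂ 𝓑 := by
      refine ⟨Finset.filter_subset _ _, fun hsub => hi ?_⟩
      exact (Finset.mem_filter.mp (hsub hB')).2
    exact_mod_cast Finset.card_lt_card this
  -- cardinality of filtered images
  have h_cardA : ∀ A ∈ 𝓐, ∀ B ∈ 𝓑, ∀ P : Finset ℕ,
      (filteredA 𝓐 A (A \ B) P).card = (𝓐.filter fun A' => A' ∩ (A \ B) = P).card := by
    intro A hAm B hBm P
    apply Finset.card_image_of_injOn
    intro a₁ h₁ a₂ h₂ heq
    simp only [Finset.mem_coe, Finset.mem_filter] at h₁ h₂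
    apply hrec3 a₁ h₁.1 a₂ h₂.1 B hBm B hBm
    have e : a₁ ∩ (A \ B) = a₂ ∩ (A \ B) := h₁.2.trans h₂.2.symm
    ext x
    have e1 := Finset.ext_iff.mp e x
    have e2 := Finset.ext_iff.mp heq x
    simp only [Finset.mem_inter, Finset.mem_sdiff] at e1 e2 ⊢
    by_cases hxA : x ∈ A <;> tauto
  have h_cardB : ∀ A ∈ 𝓐, ∀ B ∈ 𝓑,
      (filteredB 𝓑 A (A \ B)).card = (𝓑.filter fun B' => A \ B' = A \ B).card := by
    intro A hAm B hBm
    apply Finset.card_image_of_injOn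
    intro b₁ h₁ b₂ h₂ heq
    simp only [Finset.mem_coe, Finset.mem_filter] at h₁ h₂
    exact hrec4 A hAm A hAm b₁ h₁.1 b₂ h₂.1 heq
  -- pointwise log inequality from hfil
  have hpoint : ∀ x ∈ 𝓐 ×ˢ 𝓑, ∀ A'' ∈ 𝓐,
      (k:ℝ) * Real.logb 2 θ ≤
        Real.logb 2 ((𝓐.card : ℝ) / ((𝓐.filter fun A' => A' ∩ (x.1 \ x.2) = A'' ∩ (x.1 \ x.2)).card : ℝ))
        + Real.logb 2 ((𝓑.card : ℝ) / ((𝓑.filter fun B' => x.1 \ B' = x.1 \ x.2).card : ℝ)) := by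
    rintro ⟨A, B⟩ hxm A'' hA''
    obtain ⟨hAm, hBm⟩ := Finset.mem_product.mp hxm
    have h := hfil A hAm B hBm (A'' ∩ (A \ B)) Finset.inter_subset_right
    rw [h_cardA A hAm B hBm, h_cardB A hAm B hBm] at h
    have hfA : (0:ℝ) < ((𝓐.filter fun A' => A' ∩ (A \ B) = A'' ∩ (A \ B)).card : ℝ) := by
      have : A'' ∈ 𝓐.filter fun A' => A' ∩ (A \ B) = A'' ∩ (A \ B) := Finset.mem_filter.mpr ⟨hA'', rfl⟩
      exact_mod_cast Finset.card_pos.mpr ⟨A'', this⟩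
    have hfB : (0:ℝ) < ((𝓑.filter fun B' => A \ B' = A \ B).card : ℝ) := by
      have : B ∈ 𝓑.filter fun B' => A \ B' = A \ B := Finset.mem_filter.mpr ⟨hBm, rfl⟩
      exact_mod_cast Finset.card_pos.mpr ⟨B, this⟩
    have hlog := Real.logb_le_logb_of_le one_lt_two (div_pos (mul_pos hfA hfB) (mul_pos hα hβ)) h
    have hz : Real.logb 2 (θ ^ (-(k:ℤ))) = -((k:ℝ) * Real.logb 2 θ) := by
      rw [Real.logb, Real.logb, Real.log_zpow]; push_cast; ring
    set fA : ℝ := ((𝓐.filter fun A' => A' ∩ (A \ B) = A'' ∩ (A \ B)).card : ℝ) with hfAdef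
    set fB : ℝ := ((𝓑.filter fun B' => A \ B' = A \ B).card : ℝ) with hfBdef
    have eh : Real.logb 2 (fA * fB / ((𝓐.card : ℝ) * (𝓑.card : ℝ)))
        = Real.logb 2 (fA * fB) - Real.logb 2 ((𝓐.card : ℝ) * (𝓑.card : ℝ)) :=
      Real.logb_div (mul_pos hfA hfB).ne' (mul_pos hα hβ).ne'
    have em1 : Real.logb 2 (fA * fB) = Real.logb 2 fA + Real.logb 2 fB :=
      Real.logb_mul hfA.ne' hfB.ne'
    have em2 : Real.logb 2 ((𝓐.card : ℝ) * (𝓑.card : ℝ))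
        = Real.logb 2 (𝓐.card : ℝ) + Real.logb 2 (𝓑.card : ℝ) :=
      Real.logb_mul hα.ne' hβ.ne'
    have efA : Real.logb 2 ((𝓐.card : ℝ) / fA) = Real.logb 2 (𝓐.card : ℝ) - Real.logb 2 fA :=
      Real.logb_div hα.ne' hfA.ne'
    have efB : Real.logb 2 ((𝓑.card : ℝ) / fB) = Real.logb 2 (𝓑.card : ℝ) - Real.logb 2 fB :=
      Real.logb_div hβ.ne' hfB.ne'
    rw [hz] at hlog
    rw [efA, efB]
    linarith
  -- counting identities
  have hbneg : ∀ i, ((𝓑.filter fun B => i ∉ B).card : ℝ) = (𝓑.card : ℝ) * (1 - b i) := by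
    intro i
    have hsplit := Finset.card_filter_add_card_filter_not (s := 𝓑) (p := fun B => i ∈ B)
    have hc : ((𝓑.filter fun B => i ∉ B).card : ℝ)
        = (𝓑.card : ℝ) - ((𝓑.filter fun B => i ∈ B).card : ℝ) := by
      have := congrArg (fun m : ℕ => (m : ℝ)) hsplit
      push_cast at this
      linarith
    rw [hc, hb i]
    field_simp
  have haneg : ∀ i, ((𝓐.filter fun A => i ∉ A).card : ℝ) = (𝓐.card : ℝ) - ((𝓐.filter fun A => i ∈ A).card : ℝ) := by
    intro i
    have hsplit := Finset.card_filter_add_card_filter_not (s := 𝓐) (p := fun A => i ∈ A)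
    have := congrArg (fun m : ℕ => (m : ℝ)) hsplit
    push_cast at this
    linarith
  have hcnt : ∀ i, ((𝓐 ×ˢ 𝓑).filter fun x => i ∈ x.1 \ x.2)
      = (𝓐.filter fun A => i ∈ A) ×ˢ (𝓑.filter fun B => i ∉ B) := by
    intro i
    ext ⟨C, D⟩
    simp only [Finset.mem_filter, Finset.mem_product, Finset.mem_sdiff]
    tauto
  have hcntR : ∀ i, ((((𝓐 ×ˢ 𝓑).filter fun x => i ∈ x.1 \ x.2).card : ℝ))
      = ((𝓐.card : ℝ) * (𝓑.card : ℝ)) * (a i * (1 - b i)) := by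
    intro i
    rw [hcnt i, Finset.card_product]
    push_cast
    rw [hbneg i, ha i]
    field_simp
  have hcntNegR : ∀ i, ((((𝓐 ×ˢ 𝓑).filter fun x => i ∉ x.1 \ x.2).card : ℝ))
      = ((𝓐.card : ℝ) * (𝓑.card : ℝ)) - (((𝓐 ×ˢ 𝓑).filter fun x => i ∈ x.1 \ x.2).card : ℝ) := by
    intro i
    have hsplit := Finset.card_filter_add_card_filter_not (s := 𝓐 ×ˢ 𝓑) (p := fun x => i ∈ x.1 \ x.2)
    have := congrArg (fun m : ℕ => (m : ℝ)) hsplit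
    push_cast at this
    rw [Finset.card_product] at this
    push_cast at this
    linarith
  -- fiber identification for the pair sum
  have hfibB : ∀ x ∈ 𝓐 ×ˢ 𝓑, ((𝓐 ×ˢ 𝓑).filter fun z => z.1 \ z.2 = x.1 \ x.2)
      = {x.1} ×ˢ (𝓑.filter fun B' => x.1 \ B' = x.1 \ x.2) := by
    rintro ⟨A, B⟩ hxm
    obtain ⟨hAm, hBm⟩ := Finset.mem_product.mp hxm
    ext ⟨C, D⟩
    simp only [Finset.mem_filter, Finset.mem_product, Finset.mem_singleton]
    constructor
    · rintro ⟨⟨hC, hD⟩, he⟩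
      have hCA : C = A := hrec3 C hC A hAm D hD B hBm he
      subst hCA
      tauto
    · intro hyp
      have hCA : C = A := by tauto
      subst hCA
      tauto
  have hfibBcard : ∀ x ∈ 𝓐 ×ˢ 𝓑, (((𝓐 ×ˢ 𝓑).filter fun z => z.1 \ z.2 = x.1 \ x.2).card : ℝ)
      = ((𝓑.filter fun B' => x.1 \ B' = x.1 \ x.2).card : ℝ) := by
    intro x hx
    rw [hfibB x hx, Finset.card_product, Finset.card_singleton, one_mul]
  have hfBpos : ∀ x ∈ 𝓐 ×ˢ 𝓑, (0:ℝ) < ((𝓑.filter fun B' => x.1 \ B' = x.1 \ x.2).card : ℝ) := by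
    intro x hx
    obtain ⟨hAm, hBm⟩ := Finset.mem_product.mp hx
    have : x.2 ∈ 𝓑.filter fun B' => x.1 \ B' = x.1 \ x.2 := Finset.mem_filter.mpr ⟨hBm, rfl⟩
    exact_mod_cast Finset.card_pos.mpr ⟨x.2, this⟩
  -- Gibbs for the pair sum (step C)
  have hgibC : ∑ x ∈ 𝓐 ×ˢ 𝓑, Real.logb 2 (((𝓐 ×ˢ 𝓑).card : ℝ) /
        ((((𝓐 ×ˢ 𝓑).filter fun z => z.1 \ z.2 = x.1 \ x.2).card : ℝ)))
      ≤ ((𝓐.card : ℝ) * (𝓑.card : ℝ)) * ∑ i ∈ X, binEnt (a i * (1 - b i)) := by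
    have hmain := gibbs_product (𝓐 ×ˢ 𝓑) (fun z => z.1 \ z.2) X (fun i => a i * (1 - b i))
      (by
        intro x hx
        obtain ⟨hAm, _⟩ := Finset.mem_product.mp hx
        exact fun i hi => hAX x.1 hAm (Finset.mem_sdiff.mp hi).1)
      (by
        intro i _
        have h1 := ha01 i; have h2 := hb01 i
        constructor
        · show (0:ℝ) ≤ a i * (1 - b i)
          nlinarith [h1.1, h2.2]
        · show a i * (1 - b i) ≤ 1
          nlinarith [h1.1, h1.2, h2.1, h2.2])
      (by
        intro x hx i _ hi
        obtain ⟨hAm, hBm⟩ := Finset.mem_product.mp hx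
        obtain ⟨hi1, hi2⟩ := Finset.mem_sdiff.mp hi
        have l1 := haPos i x.1 hAm hi1
        have l2 := hbLT i x.2 hBm hi2
        show (0:ℝ) < a i * (1 - b i)
        nlinarith)
      (by
        intro x hx i _ hi
        obtain ⟨hAm, hBm⟩ := Finset.mem_product.mp hx
        by_cases h1 : i ∈ x.1
        · have h2 : i ∈ x.2 := by
            by_contra h2
            exact hi (Finset.mem_sdiff.mpr ⟨h1, h2⟩)
          have l1 := hbPos i x.2 hBm h2
          have l2 := ha01 i; have l3 := hb01 i
          show a i * (1 - b i) < 1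
          nlinarith [l2.1, l2.2, l3.1, l3.2]
        · have l1 := haLT i x.1 hAm h1
          have l2 := ha01 i; have l3 := hb01 i
          show a i * (1 - b i) < 1
          nlinarith [l2.1, l2.2, l3.1, l3.2])
    refine le_trans hmain (le_of_eq ?_)
    rw [Finset.mul_sum]
    apply Finset.sum_congr rfl
    intro i hi
    have e1 : ((((𝓐 ×ˢ 𝓑).filter fun x => i ∈ (fun z => z.1 \ z.2) x).card : ℝ))
        = ((𝓐.card : ℝ) * (𝓑.card : ℝ)) * (a i * (1 - b i)) := hcntR i
    have e2 : ((((𝓐 ×ˢ 𝓑).filter fun x => i ∉ (fun z => z.1 \ z.2) x).card : ℝ))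
        = ((𝓐.card : ℝ) * (𝓑.card : ℝ)) - (((𝓐 ×ˢ 𝓑).filter fun x => i ∈ x.1 \ x.2).card : ℝ) := hcntNegR i
    rw [e1, e2]
    rw [hcntR i]
    exact binEnt_term _ _ _ rfl
  -- real count of i-membership in 𝓐
  have haR : ∀ i, ((𝓐.filter fun A' => i ∈ A').card : ℝ) = (𝓐.card : ℝ) * a i := by
    intro i
    rw [ha i, mul_div_assoc']
    rw [mul_comm, mul_div_assoc, div_self hα.ne', mul_one]
  -- Gibbs for the inner sum (step D), for each fixed pair x
  have hgibD : ∀ x ∈ 𝓐 ×ˢ 𝓑,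
      (∑ A'' ∈ 𝓐, Real.logb 2 ((𝓐.card : ℝ) /
        ((𝓐.filter fun A' => A' ∩ (x.1 \ x.2) = A'' ∩ (x.1 \ x.2)).card : ℝ)))
      ≤ (𝓐.card : ℝ) * ∑ i ∈ x.1 \ x.2, binEnt (a i) := by
    intro x hx
    have hmain := gibbs_product 𝓐 (fun z => z ∩ (x.1 \ x.2)) (x.1 \ x.2) a
      (fun z _ => Finset.inter_subset_right)
      (fun i _ => ha01 i)
      (by
        intro A'' hA'' i _ hi
        exact haPos i A'' hA'' (Finset.mem_inter.mp hi).1)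
      (by
        intro A'' hA'' i hiU hi
        apply haLT i A'' hA''
        intro hiA
        exact hi (Finset.mem_inter.mpr ⟨hiA, hiU⟩))
    refine le_trans hmain (le_of_eq ?_)
    rw [Finset.mul_sum]
    apply Finset.sum_congr rfl
    intro i hiU
    have ef1 : (𝓐.filter fun z => i ∈ z ∩ (x.1 \ x.2)) = 𝓐.filter fun A' => i ∈ A' := by
      apply Finset.filter_congr
      intro z _
      simp [Finset.mem_inter, hiU]
    have ef2 : (𝓐.filter fun z => i ∉ z ∩ (x.1 \ x.2)) = 𝓐.filter fun A' => i ∉ A' := by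
      apply Finset.filter_congr
      intro z _
      simp [Finset.mem_inter, hiU]
    rw [ef1, ef2, haneg i, haR i]
    exact binEnt_term _ _ _ rfl
  -- swap of the double counting sum
  have hswap : ∑ x ∈ 𝓐 ×ˢ 𝓑, ∑ i ∈ x.1 \ x.2, binEnt (a i)
      = ∑ i ∈ X, ((((𝓐 ×ˢ 𝓑).filter fun x => i ∈ x.1 \ x.2).card : ℝ)) * binEnt (a i) := by
    have h1 : ∀ x ∈ 𝓐 ×ˢ 𝓑, ∑ i ∈ x.1 \ x.2, binEnt (a i)
        = ∑ i ∈ X, if i ∈ x.1 \ x.2 then binEnt (a i) else 0 := by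
      intro x hx
      obtain ⟨hAm, _⟩ := Finset.mem_product.mp hx
      rw [Finset.sum_ite_mem X (x.1 \ x.2),
        Finset.inter_eq_right.mpr (fun i hi => hAX x.1 hAm (Finset.mem_sdiff.mp hi).1)]
    rw [Finset.sum_congr rfl h1, Finset.sum_comm]
    apply Finset.sum_congr rfl
    intro i _
    rw [Finset.sum_ite, Finset.sum_const, Finset.sum_const_zero, add_zero, nsmul_eq_mul]
  -- sum of a i over X equals k
  have hK : ∑ i ∈ X, a i = (k:ℝ) := by
    have hNat : ∑ i ∈ X, ((𝓐.filter fun A => i ∈ A).card) = 𝓐.card * k := by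
      calc ∑ i ∈ X, ((𝓐.filter fun A => i ∈ A).card)
          = ∑ i ∈ X, ∑ A ∈ 𝓐, if i ∈ A then 1 else 0 := by
            exact Finset.sum_congr rfl fun i _ => Finset.card_filter _ _
        _ = ∑ A ∈ 𝓐, ∑ i ∈ X, if i ∈ A then 1 else 0 := Finset.sum_comm
        _ = ∑ A ∈ 𝓐, (X.filter fun i => i ∈ A).card := by
            exact Finset.sum_congr rfl fun A _ => (Finset.card_filter _ _).symm
        _ = ∑ A ∈ 𝓐, k := by
            apply Finset.sum_congr rfl
            intro A hAm
            rw [Finset.filter_mem_eq_inter, Finset.inter_eq_right.mpr (hAX A hAm)]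
            exact hkA A hAm
        _ = 𝓐.card * k := by rw [Finset.sum_const, smul_eq_mul]
    have hcast : ∑ i ∈ X, ((𝓐.filter fun A => i ∈ A).card : ℝ) = (𝓐.card : ℝ) * k := by
      exact_mod_cast congrArg (fun m : ℕ => (m : ℝ)) hNat
    have : ∑ i ∈ X, a i = (∑ i ∈ X, ((𝓐.filter fun A => i ∈ A).card : ℝ)) / (𝓐.card : ℝ) := by
      rw [Finset.sum_div]
      exact Finset.sum_congr rfl fun i _ => ha i
    rw [this, hcast]
    exact mul_div_cancel_left₀ _ hα.ne'
  -- abbreviations for the three big sums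
  set R1 : ℝ := ∑ i ∈ X, (a i * (1 - b i)) * binEnt (a i) with hR1def
  set R2 : ℝ := ∑ i ∈ X, binEnt (a i * (1 - b i)) with hR2def
  set SS1 : ℝ := ∑ x ∈ 𝓐 ×ˢ 𝓑, ∑ A'' ∈ 𝓐, Real.logb 2 ((𝓐.card : ℝ) /
      ((𝓐.filter fun A' => A' ∩ (x.1 \ x.2) = A'' ∩ (x.1 \ x.2)).card : ℝ)) with hSS1def
  set SS2 : ℝ := ∑ x ∈ 𝓐 ×ˢ 𝓑, Real.logb 2 ((𝓑.card : ℝ) /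
      ((𝓑.filter fun B' => x.1 \ B' = x.1 \ x.2).card : ℝ)) with hSS2def
  set SSg : ℝ := ∑ x ∈ 𝓐 ×ˢ 𝓑, Real.logb 2 (((𝓐 ×ˢ 𝓑).card : ℝ) /
      ((((𝓐 ×ˢ 𝓑).filter fun z => z.1 \ z.2 = x.1 \ x.2).card : ℝ))) with hSSgdef
  -- SSg = αβ log α + SS2
  have hSum : SSg = ((𝓐.card : ℝ) * (𝓑.card : ℝ)) * Real.logb 2 (𝓐.card : ℝ) + SS2 := by
    rw [hSSgdef, hSS2def]
    have hper : ∀ x ∈ 𝓐 ×ˢ 𝓑, Real.logb 2 (((𝓐 ×ˢ 𝓑).card : ℝ) /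
        ((((𝓐 ×ˢ 𝓑).filter fun z => z.1 \ z.2 = x.1 \ x.2).card : ℝ)))
        = Real.logb 2 (𝓐.card : ℝ) + Real.logb 2 ((𝓑.card : ℝ) /
          ((𝓑.filter fun B' => x.1 \ B' = x.1 \ x.2).card : ℝ)) := by
      intro x hx
      rw [hfibBcard x hx]
      have hc : (((𝓐 ×ˢ 𝓑).card : ℝ)) = (𝓐.card : ℝ) * (𝓑.card : ℝ) := by
        rw [Finset.card_product]; push_cast; ring
      rw [hc, mul_div_assoc, Real.logb_mul hα.ne' (div_pos hβ (hfBpos x hx)).ne']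
    rw [Finset.sum_congr rfl hper, Finset.sum_add_distrib, Finset.sum_const,
      Finset.card_product, nsmul_eq_mul]
    push_cast
    ring
  -- averaged pointwise inequality
  have hAvg : ((𝓐.card : ℝ) * (𝓐.card : ℝ) * (𝓑.card : ℝ)) * ((k:ℝ) * Real.logb 2 θ)
      ≤ SS1 + (𝓐.card : ℝ) * SS2 := by
    have h1 : ∑ x ∈ 𝓐 ×ˢ 𝓑, ∑ _A'' ∈ 𝓐, ((k:ℝ) * Real.logb 2 θ)
        = ((𝓐.card : ℝ) * (𝓐.card : ℝ) * (𝓑.card : ℝ)) * ((k:ℝ) * Real.logb 2 θ) := by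
      rw [Finset.sum_const, Finset.sum_const, Finset.card_product, nsmul_eq_mul, nsmul_eq_mul]
      push_cast
      ring
    rw [← h1]
    have h2 : SS1 + (𝓐.card : ℝ) * SS2 = ∑ x ∈ 𝓐 ×ˢ 𝓑, ∑ A'' ∈ 𝓐,
        (Real.logb 2 ((𝓐.card : ℝ) /
          ((𝓐.filter fun A' => A' ∩ (x.1 \ x.2) = A'' ∩ (x.1 \ x.2)).card : ℝ))
        + Real.logb 2 ((𝓑.card : ℝ) /
          ((𝓑.filter fun B' => x.1 \ B' = x.1 \ x.2).card : ℝ))) := by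
      rw [hSS1def, hSS2def, Finset.mul_sum, ← Finset.sum_add_distrib]
      apply Finset.sum_congr rfl
      intro x _
      rw [Finset.sum_add_distrib, Finset.sum_const, nsmul_eq_mul]
    rw [h2]
    apply Finset.sum_le_sum
    intro x hx
    apply Finset.sum_le_sum
    intro A'' hA''
    exact hpoint x hx A'' hA''
  -- bound SS1
  have hSS1bound : SS1 ≤ (𝓐.card : ℝ) * (((𝓐.card : ℝ) * (𝓑.card : ℝ)) * R1) := by
    have step1 : SS1 ≤ (𝓐.card : ℝ) * ∑ x ∈ 𝓐 ×ˢ 𝓑, ∑ i ∈ x.1 \ x.2, binEnt (a i) := by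
      rw [hSS1def, Finset.mul_sum]
      apply Finset.sum_le_sum
      intro x hx
      exact hgibD x hx
    refine le_trans step1 ?_
    apply mul_le_mul_of_nonneg_left _ hα.le
    rw [hswap]
    apply le_of_eq
    rw [hR1def, Finset.mul_sum]
    apply Finset.sum_congr rfl
    intro i _
    rw [hcntR i]
    ring
  -- bound SSg
  have hSSgbound : SSg ≤ ((𝓐.card : ℝ) * (𝓑.card : ℝ)) * R2 := hgibC
  -- assemble
  have hfinal : Real.logb 2 (𝓐.card : ℝ) ≤ R1 + R2 - (k:ℝ) * Real.logb 2 θ := by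
    have hpos : (0:ℝ) < (𝓐.card : ℝ) * ((𝓐.card : ℝ) * (𝓑.card : ℝ)) := mul_pos hα (mul_pos hα hβ)
    have hscaled : ((𝓐.card : ℝ) * ((𝓐.card : ℝ) * (𝓑.card : ℝ))) * Real.logb 2 (𝓐.card : ℝ)
        ≤ ((𝓐.card : ℝ) * ((𝓐.card : ℝ) * (𝓑.card : ℝ))) * (R1 + R2 - (k:ℝ) * Real.logb 2 θ) := by
      have u2 : (𝓐.card : ℝ) * SSg ≤ (𝓐.card : ℝ) * (((𝓐.card : ℝ) * (𝓑.card : ℝ)) * R2) :=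
        mul_le_mul_of_nonneg_left hSSgbound hα.le
      have u1 : (𝓐.card : ℝ) * SSg = (𝓐.card : ℝ) * (((𝓐.card : ℝ) * (𝓑.card : ℝ)) * Real.logb 2 (𝓐.card : ℝ)) + (𝓐.card : ℝ) * SS2 := by
        rw [hSum]; ring
      nlinarith [hAvg, hSS1bound, u1, u2]
    exact le_of_mul_le_mul_left hscaled hpos
  have hgoal : ∑ i ∈ X, fFun (a i) (b i) θ = R1 + R2 - (k:ℝ) * Real.logb 2 θ := by
    have hterm : ∀ i ∈ X, fFun (a i) (b i) θ
        = (a i * (1 - b i)) * binEnt (a i) + binEnt (a i * (1 - b i)) - a i * Real.logb 2 θ :=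
      fun i _ => rfl
    rw [Finset.sum_congr rfl hterm, Finset.sum_sub_distrib, Finset.sum_add_distrib,
      ← Finset.sum_mul, hK, hR1def, hR2def]
  rw [hgoal]
  exact hfinal
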